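/- Fixed point sets of s₁ and of T∘s₁ on the Bolza curve (Proposition on fixed point sets, parts for s₁): for (z,w) ∈ P with w ≠ 0, one has s₁(z,w) = (z,w) if and only if z is real and Re z > 0 (i.e. z lies on the open positive real ray a₁); and T(s₁(z,w)) = (z,w) if and only if z is real and Re z < 0 (i.e. z lies on the open negative real ray a₃). In other words, Fix(s₁) is the full Π-preimage of a₁ and Fix(T∘s₁) is the full Π-preimage of a₃, away from points with w = 0. -/

import Mathlib

noncomputable section
open Complex ComplexConjugate

/-- `α = exp(iπ/4)`. -/
def bolzaAlpha : ℂ := Complex.exp (Real.pi * Complex.I / 4)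

/-- `β = exp(3iπ/4)`. -/
def bolzaBeta : ℂ := Complex.exp (3 * Real.pi * Complex.I / 4)

/-- The affine Bolza curve `P = {(z,w) : w²(z+α)(z+β) = z(z−α)(z−β)}`. -/
def BolzaCurve : Set (ℂ × ℂ) :=
  {p | p.2 ^ 2 * (p.1 + bolzaAlpha) * (p.1 + bolzaBeta)
       = p.1 * (p.1 - bolzaAlpha) * (p.1 - bolzaBeta)}

/-- The symmetry `s₁(z,w) = (conj z, conj z / conj w)`. -/
def s1 (p : ℂ × ℂ) : ℂ × ℂ := (conj p.1, conj p.1 / conj p.2)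

/-- The symmetry `s₂(z,w) = (−conj z, i·conj w)`. -/
def s2 (p : ℂ × ℂ) : ℂ × ℂ := (-conj p.1, Complex.I * conj p.2)

/-- The symmetry `s₃(z,w) = (1/conj z, conj w / conj z)`. -/
def s3 (p : ℂ × ℂ) : ℂ × ℂ := (1 / conj p.1, conj p.2 / conj p.1)

/-- The hyperelliptic involution `T(z,w) = (z,−w)`. -/
def hypT (p : ℂ × ℂ) : ℂ × ℂ := (p.1, -p.2)

lemma conj_bolzaAlpha : conj bolzaAlpha = -bolzaBeta := by
  rw [bolzaAlpha, bolzaBeta, ← Complex.exp_conj]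
  have h : conj (↑Real.pi * Complex.I / 4) = 3 * Real.pi * Complex.I / 4 - Real.pi * Complex.I := by
    simp [map_div₀, Complex.conj_I, map_ofNat]; ring
  rw [h, Complex.exp_sub, Complex.exp_pi_mul_I]; ring

lemma conj_bolzaBeta : conj bolzaBeta = -bolzaAlpha := by
  rw [bolzaAlpha, bolzaBeta, ← Complex.exp_conj]
  have h : conj (3 * ↑Real.pi * Complex.I / 4) = Real.pi * Complex.I / 4 - Real.pi * Complex.I := by
    simp [map_div₀, Complex.conj_I, map_ofNat]; ring
  rw [h, Complex.exp_sub, Complex.exp_pi_mul_I]; ring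

lemma bolzaAlpha_im : bolzaAlpha.im ≠ 0 := by
  have h : bolzaAlpha = Complex.exp ((Real.pi/4 : ℝ) * Complex.I) := by
    rw [bolzaAlpha]; push_cast; ring_nf
  rw [h, Complex.exp_ofReal_mul_I_im]
  have := Real.sin_pos_of_pos_of_lt_pi (x := Real.pi/4) (by positivity) (by linarith [Real.pi_pos])
  linarith

lemma bolzaBeta_im : bolzaBeta.im ≠ 0 := by
  have h : bolzaBeta = Complex.exp ((3*Real.pi/4 : ℝ) * Complex.I) := by
    rw [bolzaBeta]; push_cast; ring_nf
  rw [h, Complex.exp_ofReal_mul_I_im]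
  have := Real.sin_pos_of_pos_of_lt_pi (x := 3*Real.pi/4) (by positivity) (by linarith [Real.pi_pos])
  linarith

lemma bolza_key (z w : ℂ) (hP : (z, w) ∈ BolzaCurve) (h1 : conj z = z) :
    w * conj w = z ∨ w * conj w = -z := by
  have hzim : z.im = 0 := Complex.conj_eq_iff_im.mp h1
  have hP' : w ^ 2 * (z + bolzaAlpha) * (z + bolzaBeta)
      = z * (z - bolzaAlpha) * (z - bolzaBeta) := hP
  have hc : (conj w) ^ 2 * (z - bolzaBeta) * (z - bolzaAlpha)
      = z * (z + bolzaBeta) * (z + bolzaAlpha) := by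
    have h2 := congrArg conj hP'
    simp only [map_mul, map_pow, map_add, map_sub, conj_bolzaAlpha, conj_bolzaBeta, h1] at h2
    linear_combination h2
  have ha : z + bolzaAlpha ≠ 0 := fun h => bolzaAlpha_im (by
    have := congrArg Complex.im h; simpa [hzim] using this)
  have hb : z + bolzaBeta ≠ 0 := fun h => bolzaBeta_im (by
    have := congrArg Complex.im h; simpa [hzim] using this)
  have ha' : z - bolzaAlpha ≠ 0 := fun h => bolzaAlpha_im (by
    have := congrArg Complex.im h; simpa [hzim] using this)
  have hb' : z - bolzaBeta ≠ 0 := fun h => bolzaBeta_im (by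
    have := congrArg Complex.im h; simpa [hzim] using this)
  have hD : (z + bolzaAlpha) * (z + bolzaBeta) * (z - bolzaAlpha) * (z - bolzaBeta) ≠ 0 := by
    exact mul_ne_zero (mul_ne_zero (mul_ne_zero ha hb) ha') hb'
  have h3 : ((w * conj w) ^ 2 - z ^ 2) *
      ((z + bolzaAlpha) * (z + bolzaBeta) * (z - bolzaAlpha) * (z - bolzaBeta)) = 0 := by
    linear_combination (conj w) ^ 2 * ((z - bolzaAlpha) * (z - bolzaBeta)) * hP'
      + z * ((z - bolzaAlpha) * (z - bolzaBeta)) * hc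
  have h4 : (w * conj w) ^ 2 - z ^ 2 = 0 := by
    rcases mul_eq_zero.mp h3 with h | h
    · exact h
    · exact absurd h hD
  have h5 : (w * conj w - z) * (w * conj w + z) = 0 := by linear_combination h4
  rcases mul_eq_zero.mp h5 with h | h
  · exact Or.inl (sub_eq_zero.mp h)
  · exact Or.inr (eq_neg_of_add_eq_zero_left h)

/-- Fixed point sets of `s₁` and of `T∘s₁` on the Bolza curve: away from `w = 0`,
`Fix(s₁)` is the preimage of the open positive real ray `a₁` under the projection
`Π(z,w) = z`, and `Fix(T∘s₁)` is the preimage of the open negative real ray `a₃`. -/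
theorem fix_s1 (z w : ℂ) (hP : (z, w) ∈ BolzaCurve) (hw : w ≠ 0) :
    (s1 (z, w) = (z, w) ↔ conj z = z ∧ 0 < z.re) ∧
    (hypT (s1 (z, w)) = (z, w) ↔ conj z = z ∧ z.re < 0) := by
  have hcw : conj w ≠ 0 := by simpa using hw
  have hnsq : 0 < Complex.normSq w := Complex.normSq_pos.mpr hw
  have hmc : w * conj w = (Complex.normSq w : ℂ) := Complex.mul_conj w
  constructor
  · constructor
    · intro h
      rw [s1, Prod.mk.injEq] at h
      obtain ⟨h1, h2⟩ := h
      refine ⟨h1, ?_⟩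
      have h1' : conj z = z := h1
      field_simp at h2
      have hz : z = (Complex.normSq w : ℂ) := by rw [← h1', h2, mul_comm, hmc]
      have := congrArg Complex.re hz
      simp at this
      linarith
    · rintro ⟨h1, h2⟩
      rcases bolza_key z w hP h1 with h | h
      · rw [s1, Prod.mk.injEq]
        refine ⟨h1, ?_⟩
        rw [h1, ← h]
        field_simp
      · exfalso
        have := congrArg Complex.re h
        rw [hmc] at this
        simp at this
        linarith
  · constructor
    · intro h
      rw [hypT, s1, Prod.mk.injEq] at h
      obtain ⟨h1, h2⟩ := h
      simp only at h1 h2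
      refine ⟨h1, ?_⟩
      have h3 := congrArg (fun t => t * conj w) h2
      have hz : w * conj w = -(conj z) := by
        rw [← h3, neg_mul, div_mul_cancel₀ _ hcw]
      rw [h1] at hz
      have := congrArg Complex.re hz
      rw [hmc] at this
      simp at this
      linarith
    · rintro ⟨h1, h2⟩
      rcases bolza_key z w hP h1 with h | h
      · exfalso
        have := congrArg Complex.re h
        rw [hmc] at this
        simp at this
        linarith
      · rw [hypT, s1, Prod.mk.injEq]
        refine ⟨h1, ?_⟩
        simp only
        show -(conj z / conj w) = w
        rw [h1]
        field_simp
        linear_combination -h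

end
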